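/- arXiv:2603.21113 — 3 statements merged into one kernel-verified Lean document; each statement's English description precedes it below -/
import Mathlib

section
/- Sphere integral estimate (Lemma 5.2, part 1): Let d ≥ 2 and 0 < b < d−1. There exists a constant C > 0 such that for all r > 0 and all p ∈ ℝ^d: ∫_{S^{d−1}} e^{−‖ru − p‖} · ‖ru − p‖^{−b} dσ(u) ≤ C · e^{−|r − ‖p‖|/2} / (r^b + r^{d−1}). -/
open MeasureTheory Metric
open scoped ENNReal NNReal

noncomputable section

open Set MeasureTheory.Measure


abbrev Ed (d : ℕ) : Type := EuclideanSpace ℝ (Fin d)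

def capC (d : ℕ) : ℝ := 2 ^ d * (volume (ball (0 : Ed d) 1)).toReal

lemma ball_vol_pos (d : ℕ) : 0 < (volume (ball (0 : Ed d) 1)).toReal :=
  ENNReal.toReal_pos (measure_ball_pos _ _ one_pos).ne' measure_ball_lt_top.ne

lemma capC_pos (d : ℕ) : 0 < capC d := by
  have := ball_vol_pos d; unfold capC; positivity

lemma ed_nontrivial (d : ℕ) (hd : 2 ≤ d) : Nontrivial (Ed d) :=
  Module.nontrivial_of_finrank_pos (R := ℝ)
    (by rw [finrank_euclideanSpace_fin]; omega)

lemma cap_bound (d : ℕ) (hd : 2 ≤ d) (q : Ed d) {s : ℝ} (hs : 0 < s) :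
    (volume : Measure (Ed d)).toSphere
      {u : sphere (0 : Ed d) 1 | ‖(u : Ed d) - q‖ ≤ s}
      ≤ ENNReal.ofReal (capC d * s ^ (d - 1)) := by
  have hdim : Module.finrank ℝ (Ed d) = d := finrank_euclideanSpace_fin
  haveI : Nontrivial (Ed d) := ed_nontrivial d hd
  set μ : Measure (Ed d) := volume with hμ
  set σ := μ.toSphere with hσ
  set ν := Measure.volumeIoiPow (Module.finrank ℝ (Ed d) - 1) with hν
  have hmp := μ.measurePreserving_homeomorphUnitSphereProd
  set A : Set (sphere (0 : Ed d) 1) := {u | ‖(u : Ed d) - q‖ ≤ s} with hA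
  have hAm : MeasurableSet A :=
    (isClosed_le (by fun_prop) continuous_const).measurableSet
  set J : Set (Ioi (0:ℝ)) := Subtype.val ⁻¹' Ioo 1 (1+s) with hJ
  have hJm : MeasurableSet J := measurable_subtype_coe measurableSet_Ioo
  have hprod : σ A * ν J = (σ.prod ν) (A ×ˢ J) := (Measure.prod_prod A J).symm
  have hpre : (μ.comap Subtype.val) ((homeomorphUnitSphereProd (Ed d)) ⁻¹' (A ×ˢ J))
      = (σ.prod ν) (A ×ˢ J) :=
    hmp.measure_preimage ((hAm.prod hJm).nullMeasurableSet)
  have hsub : ((homeomorphUnitSphereProd (Ed d)) ⁻¹' (A ×ˢ J)) ⊆ Subtype.val ⁻¹' (ball q (2*s)) := by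
    rintro ⟨x, hx⟩ hxm
    simp only [Set.mem_preimage, Set.mem_prod, hA, hJ, Set.mem_setOf_eq,
      homeomorphUnitSphereProd_apply_fst_coe, homeomorphUnitSphereProd_apply_snd_coe,
      Set.mem_Ioo] at hxm ⊢
    obtain ⟨h1, h2, h3⟩ := hxm
    have hx0 : x ≠ 0 := hx
    have hxn : (0:ℝ) < ‖x‖ := norm_pos_iff.2 hx0
    have key : ‖x - ‖x‖⁻¹ • x‖ = ‖x‖ - 1 := by
      have h4 : x - ‖x‖⁻¹ • x = (1 - ‖x‖⁻¹) • x := by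
        rw [sub_smul, one_smul]
      rw [h4, norm_smul, Real.norm_eq_abs, abs_of_nonneg, sub_mul, one_mul,
        inv_mul_cancel₀ hxn.ne']
      rw [sub_nonneg]
      exact inv_le_one_of_one_le₀ h2.le
    have htri : ‖x - q‖ ≤ ‖x - ‖x‖⁻¹ • x‖ + ‖‖x‖⁻¹ • x - q‖ := norm_sub_le_norm_sub_add_norm_sub _ _ _
    rw [mem_ball_iff_norm]
    calc ‖x - q‖ ≤ (‖x‖ - 1) + s := by rw [← key]; exact htri.trans (by linarith)
    _ < 2 * s := by linarith
  have hball : μ (ball q (2*s)) = ENNReal.ofReal ((2*s) ^ d) * μ (ball 0 1) := by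
    rw [Measure.addHaar_ball μ q (by positivity : (0:ℝ) ≤ 2*s), hdim]
  have hμA : (σ.prod ν) (A ×ˢ J) ≤ ENNReal.ofReal ((2*s) ^ d) * μ (ball 0 1) := by
    rw [← hpre, comap_subtype_coe_apply (measurableSet_singleton (0 : Ed d)).compl]
    refine le_trans (measure_mono ?_) hball.le
    rintro x ⟨y, hy, rfl⟩
    exact hsub hy
  have hνJ : ENNReal.ofReal s ≤ ν J := by
    rw [hν, Measure.volumeIoiPow, withDensity_apply _ hJm]
    have h1 : ENNReal.ofReal s = (volume.comap (Subtype.val : Ioi (0:ℝ) → ℝ)) J := by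
      rw [comap_subtype_coe_apply measurableSet_Ioi, hJ, Subtype.image_preimage_coe]
      have h2 : Ioi (0:ℝ) ∩ Ioo 1 (1+s) = Ioo 1 (1+s) :=
        Set.inter_eq_right.2 fun t ht => lt_trans one_pos ht.1
      rw [h2, Real.volume_Ioo]
      norm_num
    rw [h1, ← setLIntegral_one]
    exact setLIntegral_mono' hJm fun t ht =>
      ENNReal.one_le_ofReal.2 (one_le_pow₀ (le_of_lt ht.1))
  have hd1 : d - 1 + 1 = d := by omega
  have hcnn : 0 ≤ capC d * s ^ (d-1) := mul_nonneg (capC_pos d).le (by positivity)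
  have hcomb : σ A * ENNReal.ofReal s ≤ ENNReal.ofReal (capC d * s ^ (d-1)) * ENNReal.ofReal s := by
    calc σ A * ENNReal.ofReal s ≤ σ A * ν J := mul_le_mul_right hνJ _
    _ = (σ.prod ν) (A ×ˢ J) := hprod
    _ ≤ ENNReal.ofReal ((2*s) ^ d) * μ (ball 0 1) := hμA
    _ = ENNReal.ofReal (capC d * s ^ (d-1)) * ENNReal.ofReal s := by
        rw [← ENNReal.ofReal_toReal (measure_ball_lt_top (x := (0 : Ed d)) (r := 1)).ne,
          ← ENNReal.ofReal_mul (by positivity), ← ENNReal.ofReal_mul hcnn]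
        congr 1
        have hss : s ^ d = s ^ (d-1) * s := by rw [← pow_succ, hd1]
        rw [capC, mul_pow, hss, hμ]
        ring
  exact (ENNReal.mul_le_mul_iff_left (ENNReal.ofReal_pos.2 hs).ne' ENNReal.ofReal_ne_top).1 hcomb


lemma meas_zero_of_cap {X : Type*} [MeasurableSpace X] (σ : Measure X) (D : X → ℝ)
    {A : ℝ} {n : ℕ}
    (H : ∀ t : ℝ, 0 < t → σ {u | D u ≤ t} ≤ ENNReal.ofReal (A * t ^ n)) (hn : 1 ≤ n) :
    σ {u | D u ≤ 0} = 0 := by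
  have key : ∀ m : ℕ, σ {u | D u ≤ 0} ≤ ENNReal.ofReal (A * (1/(m+1:ℝ)) ^ n) := fun m => by
    refine le_trans (measure_mono fun u hu => ?_) (H _ (by positivity))
    have hu' : D u ≤ 0 := hu
    exact le_trans hu' (by positivity)
  have h2 : Filter.Tendsto (fun m : ℕ => ENNReal.ofReal (A * (1/(m+1:ℝ)) ^ n))
      Filter.atTop (nhds 0) := by
    rw [← ENNReal.ofReal_zero]
    refine (ENNReal.continuous_ofReal.tendsto 0).comp ?_
    have h3 : Filter.Tendsto (fun m : ℕ => (1/(m+1:ℝ))) Filter.atTop (nhds 0) :=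
      tendsto_one_div_add_atTop_nhds_zero_nat
    have h4 := (h3.pow n).const_mul A
    rw [zero_pow (by omega), mul_zero] at h4
    exact h4
  exact nonpos_iff_eq_zero.1 (ge_of_tendsto' h2 key)

lemma dyadic_small (d : ℕ) (hd : 2 ≤ d) {β : ℝ} (hβ0 : 0 < β) (hβd : β < (d:ℝ) - 1)
    {X : Type*} [MeasurableSpace X] (σ : Measure X) {D : X → ℝ} (hD : Measurable D)
    {A T : ℝ} (hA : 0 ≤ A) (hT : 0 < T)
    (H : ∀ t : ℝ, 0 < t → σ {u | D u ≤ t} ≤ ENNReal.ofReal (A * t ^ (d-1))) :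
    ∫⁻ u in {u | D u ≤ T}, (ENNReal.ofReal (D u)) ^ (-β) ∂σ
      ≤ ENNReal.ofReal (A * ((2:ℝ) ^ β * (1 - (2:ℝ) ^ (-((d:ℝ)-1-β)))⁻¹)
          * T ^ ((d:ℝ)-1-β)) := by
  set γ : ℝ := (d:ℝ) - 1 - β with hγ
  have hγ0 : 0 < γ := by rw [hγ]; linarith
  have h2 : (0:ℝ) < 2 := two_pos
  have hq1 : (2:ℝ) ^ (-γ) < 1 :=
    Real.rpow_lt_one_of_one_lt_of_neg one_lt_two (by linarith)
  have hq0 : (0:ℝ) < (2:ℝ) ^ (-γ) := Real.rpow_pos_of_pos h2 _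
  set q : ℝ := (2:ℝ) ^ (-γ) with hqdef
  -- dyadic pieces
  set Ej : ℕ → Set X := fun j =>
    {u | (2:ℝ) ^ (-(j:ℝ)-1) * T < D u ∧ D u ≤ (2:ℝ) ^ (-(j:ℝ)) * T} with hEj
  have hEm : ∀ j, MeasurableSet (Ej j) := fun j => by
    have : Ej j = D ⁻¹' (Ioc ((2:ℝ) ^ (-(j:ℝ)-1) * T) ((2:ℝ) ^ (-(j:ℝ)) * T)) := rfl
    rw [this]; exact hD measurableSet_Ioc
  have hzero : σ {u | D u ≤ 0} = 0 := meas_zero_of_cap σ D H (by omega)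
  have hcover : {u | D u ≤ T} ⊆ {u | D u ≤ 0} ∪ ⋃ j, Ej j := by
    intro u hu
    have hu' : D u ≤ T := hu
    by_cases h : D u ≤ 0
    · exact Or.inl h
    push_neg at h
    right
    have hex : ∃ n : ℕ, (2:ℝ) ^ (-(n:ℝ)-1) * T < D u := by
      obtain ⟨n, hn⟩ := exists_pow_lt_of_lt_one (div_pos h hT) (by norm_num : (2:ℝ)⁻¹ < 1)
      refine ⟨n, ?_⟩
      have hc : ((2:ℝ)⁻¹) ^ n = (2:ℝ) ^ (-(n:ℝ)) := by
        rw [← Real.rpow_natCast ((2:ℝ)⁻¹) n, ← Real.rpow_neg_one, ← Real.rpow_mul h2.le]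
        norm_num
      rw [hc] at hn
      have h5 : (2:ℝ) ^ (-(n:ℝ)) * T < D u := (lt_div_iff₀ hT).1 hn
      refine lt_of_le_of_lt ?_ h5
      have : (2:ℝ) ^ (-(n:ℝ)-1) ≤ (2:ℝ) ^ (-(n:ℝ)) :=
        Real.rpow_le_rpow_of_exponent_le one_le_two (by linarith)
      exact mul_le_mul_of_nonneg_right this hT.le
    refine Set.mem_iUnion.2 ⟨Nat.find hex, Nat.find_spec hex, ?_⟩
    rcases Nat.eq_zero_or_pos (Nat.find hex) with h0 | h0
    · rw [h0]
      simpa using hu'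
    · have hmin := Nat.find_min hex (m := Nat.find hex - 1) (by omega)
      push_neg at hmin
      have hc1 : ((Nat.find hex - 1 : ℕ) : ℝ) = (Nat.find hex : ℝ) - 1 := by
        push_cast [Nat.cast_sub h0]; ring
      have hc2 : -(((Nat.find hex : ℝ)) - 1) - 1 = -(Nat.find hex : ℝ) := by ring
      calc D u ≤ (2:ℝ) ^ (-((Nat.find hex - 1 : ℕ):ℝ)-1) * T := hmin
      _ = (2:ℝ) ^ (-((Nat.find hex : ℕ):ℝ)) * T := by rw [hc1, hc2]
  have hdisj : Pairwise (Function.onFun Disjoint Ej) := by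
    refine (pairwise_disjoint_on Ej).2 fun m n hmn => Set.disjoint_left.2 fun u hm hn => ?_
    have h1 : D u ≤ (2:ℝ) ^ (-(n:ℝ)) * T := hn.2
    have h2' : (2:ℝ) ^ (-(m:ℝ)-1) * T < D u := hm.1
    have h3 : (2:ℝ) ^ (-(n:ℝ)) ≤ (2:ℝ) ^ (-(m:ℝ)-1) := by
      refine Real.rpow_le_rpow_of_exponent_le one_le_two ?_
      have : (m:ℝ) + 1 ≤ (n:ℝ) := by exact_mod_cast hmn
      linarith
    have := mul_le_mul_of_nonneg_right h3 hT.le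
    linarith
  -- bound each piece
  have hpiece : ∀ j : ℕ, ∫⁻ u in Ej j, (ENNReal.ofReal (D u)) ^ (-β) ∂σ
      ≤ ENNReal.ofReal ((A * ((2:ℝ) ^ β) * T ^ γ) * q ^ j) := by
    intro j
    have haj : (0:ℝ) < (2:ℝ) ^ (-(j:ℝ)-1) * T := by positivity
    have hbj : (0:ℝ) < (2:ℝ) ^ (-(j:ℝ)) * T := by positivity
    have hint : ∫⁻ u in Ej j, (ENNReal.ofReal (D u)) ^ (-β) ∂σ
        ≤ ENNReal.ofReal (((2:ℝ) ^ (-(j:ℝ)-1) * T) ^ (-β)) * σ (Ej j) := by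
      rw [← setLIntegral_const]
      refine setLIntegral_mono' (hEm j) fun u hu => ?_
      have hDu : (2:ℝ) ^ (-(j:ℝ)-1) * T < D u := hu.1
      rw [ENNReal.ofReal_rpow_of_pos (lt_trans haj hDu)]
      exact ENNReal.ofReal_le_ofReal
        (Real.rpow_le_rpow_of_nonpos haj hDu.le (by linarith))
    have hmeas : σ (Ej j) ≤ ENNReal.ofReal (A * ((2:ℝ) ^ (-(j:ℝ)) * T) ^ (d-1)) := by
      refine le_trans (measure_mono fun u hu => hu.2) (H _ hbj)
    calc ∫⁻ u in Ej j, (ENNReal.ofReal (D u)) ^ (-β) ∂σ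
        ≤ ENNReal.ofReal (((2:ℝ) ^ (-(j:ℝ)-1) * T) ^ (-β))
            * ENNReal.ofReal (A * ((2:ℝ) ^ (-(j:ℝ)) * T) ^ (d-1)) :=
          le_trans hint (mul_le_mul_right hmeas _)
    _ = ENNReal.ofReal ((((2:ℝ) ^ (-(j:ℝ)-1) * T) ^ (-β))
            * (A * ((2:ℝ) ^ (-(j:ℝ)) * T) ^ (d-1))) := by
          rw [← ENNReal.ofReal_mul (by positivity)]
    _ = ENNReal.ofReal ((A * ((2:ℝ) ^ β) * T ^ γ) * q ^ j) := by
          congr 1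
          have e1 : ((2:ℝ) ^ (-(j:ℝ)-1) * T) ^ (-β)
              = (2:ℝ) ^ ((-(j:ℝ)-1) * (-β)) * T ^ (-β) := by
            rw [Real.mul_rpow (by positivity) hT.le, ← Real.rpow_mul h2.le]
          have e2 : ((2:ℝ) ^ (-(j:ℝ)) * T) ^ (d-1)
              = (2:ℝ) ^ (-(j:ℝ) * ((d:ℝ)-1)) * T ^ ((d:ℝ)-1) := by
            have hc : ((d-1:ℕ):ℝ) = (d:ℝ) - 1 := by
              push_cast [Nat.cast_sub (by omega : 1 ≤ d)]; ring
            rw [mul_pow, ← Real.rpow_natCast ((2:ℝ) ^ (-(j:ℝ))) (d-1),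
              ← Real.rpow_natCast T (d-1), ← Real.rpow_mul h2.le, hc]
          have e3 : q ^ j = (2:ℝ) ^ (-γ * (j:ℝ)) := by
            rw [hqdef, ← Real.rpow_natCast ((2:ℝ) ^ (-γ)) j, ← Real.rpow_mul h2.le]
          rw [e1, e2, e3]
          have e4 : (2:ℝ) ^ ((-(j:ℝ)-1) * (-β)) * (2:ℝ) ^ (-(j:ℝ) * ((d:ℝ)-1))
              = (2:ℝ) ^ β * (2:ℝ) ^ (-γ * (j:ℝ)) := by
            rw [← Real.rpow_add h2, ← Real.rpow_add h2]
            congr 1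
            rw [hγ]; ring
          have e5 : T ^ (-β) * T ^ ((d:ℝ)-1) = T ^ γ := by
            rw [← Real.rpow_add hT, hγ]; ring_nf
          calc ((2:ℝ) ^ ((-(j:ℝ)-1) * (-β)) * T ^ (-β))
                * (A * ((2:ℝ) ^ (-(j:ℝ) * ((d:ℝ)-1)) * T ^ ((d:ℝ)-1)))
              = A * ((2:ℝ) ^ ((-(j:ℝ)-1) * (-β)) * (2:ℝ) ^ (-(j:ℝ) * ((d:ℝ)-1)))
                * (T ^ (-β) * T ^ ((d:ℝ)-1)) := by ring
          _ = A * ((2:ℝ) ^ β * (2:ℝ) ^ (-γ * (j:ℝ))) * T ^ γ := by rw [e4, e5]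
          _ = A * (2:ℝ) ^ β * T ^ γ * (2:ℝ) ^ (-γ * (j:ℝ)) := by ring
  -- put together
  calc ∫⁻ u in {u | D u ≤ T}, (ENNReal.ofReal (D u)) ^ (-β) ∂σ
      ≤ ∫⁻ u in {u | D u ≤ 0} ∪ ⋃ j, Ej j, (ENNReal.ofReal (D u)) ^ (-β) ∂σ :=
        lintegral_mono_set hcover
  _ ≤ (∫⁻ u in {u | D u ≤ 0}, (ENNReal.ofReal (D u)) ^ (-β) ∂σ)
      + ∫⁻ u in ⋃ j, Ej j, (ENNReal.ofReal (D u)) ^ (-β) ∂σ := lintegral_union_le _ _ _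
  _ = ∑' j : ℕ, ∫⁻ u in Ej j, (ENNReal.ofReal (D u)) ^ (-β) ∂σ := by
        rw [setLIntegral_measure_zero _ _ hzero, zero_add,
          lintegral_iUnion hEm hdisj]
  _ ≤ ∑' j : ℕ, ENNReal.ofReal ((A * ((2:ℝ) ^ β) * T ^ γ) * q ^ j) :=
        ENNReal.tsum_le_tsum hpiece
  _ = ENNReal.ofReal (A * ((2:ℝ) ^ β) * T ^ γ) * ∑' j : ℕ, (ENNReal.ofReal q) ^ j := by
        rw [← ENNReal.tsum_mul_left]
        congr 1; funext j
        rw [ENNReal.ofReal_mul (by positivity), ENNReal.ofReal_pow hq0.le]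
  _ = ENNReal.ofReal (A * ((2:ℝ) ^ β) * T ^ γ) * ENNReal.ofReal ((1 - q)⁻¹) := by
        rw [ENNReal.tsum_geometric, ← ENNReal.ofReal_one, ← ENNReal.ofReal_sub _ hq0.le,
          ENNReal.ofReal_inv_of_pos (by linarith)]
  _ = ENNReal.ofReal (A * ((2:ℝ) ^ β * (1 - q)⁻¹) * T ^ γ) := by
        rw [← ENNReal.ofReal_mul (by positivity)]
        congr 1; ring



lemma dyadic_large (d : ℕ) (hd : 2 ≤ d)
    {X : Type*} [MeasurableSpace X] (σ : Measure X) {D : X → ℝ} (hD : Measurable D)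
    {A : ℝ} (hA : 0 ≤ A)
    (H : ∀ t : ℝ, 0 < t → σ {u | D u ≤ t} ≤ ENNReal.ofReal (A * t ^ (d-1))) :
    ∫⁻ u in {u | 1 < D u}, (ENNReal.ofReal (D u)) ^ (-(d:ℝ)) ∂σ
      ≤ ENNReal.ofReal (A * (2:ℝ) ^ ((d:ℝ)-1) * 2) := by
  have h2 : (0:ℝ) < 2 := two_pos
  set Ej : ℕ → Set X := fun j =>
    {u | (2:ℝ) ^ (j:ℝ) < D u ∧ D u ≤ (2:ℝ) ^ ((j:ℝ)+1)} with hEj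
  have hEm : ∀ j, MeasurableSet (Ej j) := fun j => by
    have : Ej j = D ⁻¹' (Ioc ((2:ℝ) ^ (j:ℝ)) ((2:ℝ) ^ ((j:ℝ)+1))) := rfl
    rw [this]; exact hD measurableSet_Ioc
  have hcover : {u | 1 < D u} ⊆ ⋃ j, Ej j := by
    intro u hu
    have hu' : (1:ℝ) < D u := hu
    have hex : ∃ n : ℕ, D u ≤ (2:ℝ) ^ ((n:ℝ)+1) := by
      obtain ⟨n, hn⟩ := pow_unbounded_of_one_lt (D u) (one_lt_two (α := ℝ))
      refine ⟨n, le_trans hn.le ?_⟩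
      rw [← Real.rpow_natCast (2:ℝ) n]
      exact Real.rpow_le_rpow_of_exponent_le one_le_two (by linarith)
    refine Set.mem_iUnion.2 ⟨Nat.find hex, ?_, Nat.find_spec hex⟩
    rcases Nat.eq_zero_or_pos (Nat.find hex) with h0 | h0
    · rw [h0]
      simpa using hu'
    · have hmin := Nat.find_min hex (m := Nat.find hex - 1) (by omega)
      push_neg at hmin
      have hc1 : ((Nat.find hex - 1 : ℕ) : ℝ) = (Nat.find hex : ℝ) - 1 := by
        push_cast [Nat.cast_sub h0]; ring
      have hc2 : ((Nat.find hex : ℝ) - 1) + 1 = (Nat.find hex : ℝ) := by ring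
      calc (2:ℝ) ^ ((Nat.find hex : ℕ):ℝ) = (2:ℝ) ^ (((Nat.find hex - 1 : ℕ):ℝ)+1) := by
            rw [hc1, hc2]
      _ < D u := hmin
  have hdisj : Pairwise (Function.onFun Disjoint Ej) := by
    refine (pairwise_disjoint_on Ej).2 fun m n hmn => Set.disjoint_left.2 fun u hm hn => ?_
    have h1 : D u ≤ (2:ℝ) ^ ((m:ℝ)+1) := hm.2
    have h2' : (2:ℝ) ^ (n:ℝ) < D u := hn.1
    have h3 : (2:ℝ) ^ ((m:ℝ)+1) ≤ (2:ℝ) ^ (n:ℝ) := by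
      refine Real.rpow_le_rpow_of_exponent_le one_le_two ?_
      have : (m:ℝ) + 1 ≤ (n:ℝ) := by exact_mod_cast hmn
      linarith
    linarith
  have hpiece : ∀ j : ℕ, ∫⁻ u in Ej j, (ENNReal.ofReal (D u)) ^ (-(d:ℝ)) ∂σ
      ≤ ENNReal.ofReal ((A * (2:ℝ) ^ ((d:ℝ)-1)) * (2:ℝ)⁻¹ ^ j) := by
    intro j
    have haj : (0:ℝ) < (2:ℝ) ^ (j:ℝ) := Real.rpow_pos_of_pos h2 _
    have hbj : (0:ℝ) < (2:ℝ) ^ ((j:ℝ)+1) := Real.rpow_pos_of_pos h2 _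
    have hint : ∫⁻ u in Ej j, (ENNReal.ofReal (D u)) ^ (-(d:ℝ)) ∂σ
        ≤ ENNReal.ofReal (((2:ℝ) ^ (j:ℝ)) ^ (-(d:ℝ))) * σ (Ej j) := by
      rw [← setLIntegral_const]
      refine setLIntegral_mono' (hEm j) fun u hu => ?_
      have hDu : (2:ℝ) ^ (j:ℝ) < D u := hu.1
      rw [ENNReal.ofReal_rpow_of_pos (lt_trans haj hDu)]
      refine ENNReal.ofReal_le_ofReal
        (Real.rpow_le_rpow_of_nonpos haj hDu.le (neg_nonpos.2 (by positivity)))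
    have hmeas : σ (Ej j) ≤ ENNReal.ofReal (A * ((2:ℝ) ^ ((j:ℝ)+1)) ^ (d-1)) :=
      le_trans (measure_mono fun u hu => hu.2) (H _ hbj)
    calc ∫⁻ u in Ej j, (ENNReal.ofReal (D u)) ^ (-(d:ℝ)) ∂σ
        ≤ ENNReal.ofReal (((2:ℝ) ^ (j:ℝ)) ^ (-(d:ℝ)))
            * ENNReal.ofReal (A * ((2:ℝ) ^ ((j:ℝ)+1)) ^ (d-1)) :=
          le_trans hint (mul_le_mul_right hmeas _)
    _ = ENNReal.ofReal ((((2:ℝ) ^ (j:ℝ)) ^ (-(d:ℝ)))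
            * (A * ((2:ℝ) ^ ((j:ℝ)+1)) ^ (d-1))) := by
          rw [← ENNReal.ofReal_mul (by positivity)]
    _ = ENNReal.ofReal ((A * (2:ℝ) ^ ((d:ℝ)-1)) * (2:ℝ)⁻¹ ^ j) := by
          congr 1
          have hc : ((d-1:ℕ):ℝ) = (d:ℝ) - 1 := by
            push_cast [Nat.cast_sub (by omega : 1 ≤ d)]; ring
          have e1 : ((2:ℝ) ^ (j:ℝ)) ^ (-(d:ℝ)) = (2:ℝ) ^ ((j:ℝ) * (-(d:ℝ))) :=
            (Real.rpow_mul h2.le _ _).symm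
          have e2 : ((2:ℝ) ^ ((j:ℝ)+1)) ^ (d-1)
              = (2:ℝ) ^ (((j:ℝ)+1) * ((d:ℝ)-1)) := by
            rw [← Real.rpow_natCast ((2:ℝ) ^ ((j:ℝ)+1)) (d-1), ← Real.rpow_mul h2.le, hc]
          have e3 : (2:ℝ)⁻¹ ^ j = (2:ℝ) ^ (-(j:ℝ)) := by
            rw [← Real.rpow_natCast ((2:ℝ)⁻¹) j, ← Real.rpow_neg_one, ← Real.rpow_mul h2.le]
            norm_num
          rw [e1, e2, e3]
          have e4 : (2:ℝ) ^ ((j:ℝ) * (-(d:ℝ))) * (2:ℝ) ^ (((j:ℝ)+1) * ((d:ℝ)-1))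
              = (2:ℝ) ^ ((d:ℝ)-1) * (2:ℝ) ^ (-(j:ℝ)) := by
            rw [← Real.rpow_add h2, ← Real.rpow_add h2]
            congr 1; ring
          calc (2:ℝ) ^ ((j:ℝ) * (-(d:ℝ))) * (A * (2:ℝ) ^ (((j:ℝ)+1) * ((d:ℝ)-1)))
              = ((2:ℝ) ^ ((j:ℝ) * (-(d:ℝ))) * (2:ℝ) ^ (((j:ℝ)+1) * ((d:ℝ)-1))) * A := by ring
          _ = ((2:ℝ) ^ ((d:ℝ)-1) * (2:ℝ) ^ (-(j:ℝ))) * A := by rw [e4]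
          _ = A * (2:ℝ) ^ ((d:ℝ)-1) * (2:ℝ)  ^ (-(j:ℝ)) := by ring
  calc ∫⁻ u in {u | 1 < D u}, (ENNReal.ofReal (D u)) ^ (-(d:ℝ)) ∂σ
      ≤ ∫⁻ u in ⋃ j, Ej j, (ENNReal.ofReal (D u)) ^ (-(d:ℝ)) ∂σ :=
        lintegral_mono_set hcover
  _ = ∑' j : ℕ, ∫⁻ u in Ej j, (ENNReal.ofReal (D u)) ^ (-(d:ℝ)) ∂σ :=
        lintegral_iUnion hEm hdisj _
  _ ≤ ∑' j : ℕ, ENNReal.ofReal ((A * (2:ℝ) ^ ((d:ℝ)-1)) * (2:ℝ)⁻¹ ^ j) :=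
        ENNReal.tsum_le_tsum hpiece
  _ = ENNReal.ofReal (A * (2:ℝ) ^ ((d:ℝ)-1)) * ∑' j : ℕ, (ENNReal.ofReal (2:ℝ)⁻¹) ^ j := by
        rw [← ENNReal.tsum_mul_left]
        congr 1; funext j
        rw [ENNReal.ofReal_mul (by positivity), ENNReal.ofReal_pow (by norm_num)]
  _ = ENNReal.ofReal (A * (2:ℝ) ^ ((d:ℝ)-1)) * ENNReal.ofReal ((1 - (2:ℝ)⁻¹)⁻¹) := by
        rw [ENNReal.tsum_geometric, ← ENNReal.ofReal_one,
          ← ENNReal.ofReal_sub _ (by norm_num : (0:ℝ) ≤ 2⁻¹),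
          ENNReal.ofReal_inv_of_pos (by norm_num)]
  _ = ENNReal.ofReal (A * (2:ℝ) ^ ((d:ℝ)-1) * 2) := by
        rw [← ENNReal.ofReal_mul (by positivity)]
        norm_num
lemma exp_poly_bound (d : ℕ) (hd : 1 ≤ d) {x : ℝ} (hx : 0 < x) :
    Real.exp (-(x/2)) ≤ (2*(d:ℝ)) ^ d * x ^ (-(d:ℝ)) := by
  have hd0 : (0:ℝ) < (d:ℝ) := by exact_mod_cast hd
  have h1 : x / (2*(d:ℝ)) ≤ Real.exp (x/(2*(d:ℝ))) :=
    le_trans (le_add_of_nonneg_right one_pos.le) (Real.add_one_le_exp _)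
  have h2 : x ≤ (2*(d:ℝ)) * Real.exp (x/(2*(d:ℝ))) := by
    have := (div_le_iff₀ (by positivity : (0:ℝ) < 2*(d:ℝ))).1 h1
    linarith [this]
  have h3 : x ^ d ≤ ((2*(d:ℝ)) * Real.exp (x/(2*(d:ℝ)))) ^ d :=
    pow_le_pow_left₀ hx.le h2 d
  have h4 : ((2*(d:ℝ)) * Real.exp (x/(2*(d:ℝ)))) ^ d = (2*(d:ℝ)) ^ d * Real.exp (x/2) := by
    rw [mul_pow, ← Real.exp_nat_mul]
    congr 2
    field_simp
  have h5 : x ^ (-(d:ℝ)) = (x ^ d)⁻¹ := by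
    rw [Real.rpow_neg hx.le, Real.rpow_natCast]
  rw [Real.exp_neg, h5, inv_eq_one_div, inv_eq_one_div, mul_one_div,
    div_le_div_iff₀ (Real.exp_pos _) (by positivity)]
  nlinarith [h3, h4]

lemma capH (d : ℕ) (hd : 2 ≤ d) {r : ℝ} (hr : 0 < r) (p : Ed d) :
    ∀ t : ℝ, 0 < t →
      (volume : Measure (Ed d)).toSphere
        {u : sphere (0 : Ed d) 1 | ‖r • (u : Ed d) - p‖ ≤ t}
      ≤ ENNReal.ofReal ((capC d / r ^ (d-1)) * t ^ (d-1)) := by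
  intro t ht
  have hset : {u : sphere (0 : Ed d) 1 | ‖r • (u : Ed d) - p‖ ≤ t}
      = {u : sphere (0 : Ed d) 1 | ‖(u : Ed d) - r⁻¹ • p‖ ≤ t/r} := by
    ext u
    simp only [Set.mem_setOf_eq]
    have he : r • ((u : Ed d) - r⁻¹ • p) = r • (u : Ed d) - p := by
      rw [smul_sub, smul_smul, mul_inv_cancel₀ hr.ne', one_smul]
    rw [← he, norm_smul, Real.norm_eq_abs, abs_of_pos hr, mul_comm,
      ← le_div_iff₀ hr]
  rw [hset]
  refine le_trans (cap_bound d hd (r⁻¹ • p) (by positivity)) (le_of_eq ?_)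
  congr 1
  rw [div_pow]
  ring

lemma g_bound (d : ℕ) (hd : 2 ≤ d) {b : ℝ} (hb0 : 0 < b) (hbd : b < (d:ℝ) - 1) :
    ∃ C : ℝ, 0 < C ∧ ∀ r : ℝ, 0 < r → ∀ p : Ed d,
      (∫⁻ u : sphere (0 : Ed d) 1,
          ENNReal.ofReal (Real.exp (-(‖r • (u : Ed d) - p‖/2))) *
            (ENNReal.ofReal ‖r • (u : Ed d) - p‖) ^ (-b)
          ∂((volume : Measure (Ed d)).toSphere))
      ≤ ENNReal.ofReal (C / (r ^ b + r ^ ((d : ℝ) - 1))) := by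
  have hγ0 : 0 < (d:ℝ) - 1 - b := by linarith
  have hcast : ((d-1:ℕ):ℝ) = (d:ℝ) - 1 := by
    push_cast [Nat.cast_sub (by omega : 1 ≤ d)]; ring
  set Ka : ℝ := (2:ℝ) ^ b * (1 - (2:ℝ) ^ (-((d:ℝ)-1-b)))⁻¹ with hKa
  have hKa0 : 0 < Ka := by
    have hq1 : (2:ℝ) ^ (-((d:ℝ)-1-b)) < 1 :=
      Real.rpow_lt_one_of_one_lt_of_neg one_lt_two (by linarith)
    have h2b : (0:ℝ) < (2:ℝ) ^ b := Real.rpow_pos_of_pos two_pos b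
    have : (0:ℝ) < 1 - (2:ℝ) ^ (-((d:ℝ)-1-b)) := by linarith
    positivity
  set Kd : ℝ := (2*(d:ℝ)) ^ d with hKd
  have hKd0 : 0 < Kd := by
    have hdr : (0:ℝ) < (d:ℝ) := by positivity
    positivity
  set Kb : ℝ := (2:ℝ) ^ ((d:ℝ)-1) * 2 with hKb
  have hKb0 : 0 < Kb := by
    have := Real.rpow_pos_of_pos (two_pos (α := ℝ)) ((d:ℝ)-1); positivity
  set St : ℝ := d * (volume (ball (0 : Ed d) 1)).toReal with hSt
  have hSt0 : 0 < St := by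
    have h1 := ball_vol_pos d
    have : (0:ℝ) < (d:ℝ) := by exact_mod_cast (by omega : 0 < d)
    positivity
  have hcap0 := capC_pos d
  set Cs : ℝ := capC d * Ka + St with hCs
  have hCs0 : 0 < Cs := by positivity
  set Cl : ℝ := capC d * (Ka + Kd * Kb) with hCl
  have hCl0 : 0 < Cl := by positivity
  refine ⟨2 * (Cs + Cl), by positivity, fun r hr p => ?_⟩
  have hsum0 : (0:ℝ) < r ^ b + r ^ ((d:ℝ)-1) := by
    have := Real.rpow_pos_of_pos hr b
    have := Real.rpow_pos_of_pos hr ((d:ℝ)-1)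
    positivity
  set σ := (volume : Measure (Ed d)).toSphere with hσ
  set D : sphere (0 : Ed d) 1 → ℝ := fun u => ‖r • (u : Ed d) - p‖ with hDdef
  have hD : Measurable D :=
    ((continuous_subtype_val.const_smul r).sub continuous_const).norm.measurable
  set A : ℝ := capC d / r ^ (d-1) with hAdef
  have hA0 : 0 ≤ A := by positivity
  have H : ∀ t : ℝ, 0 < t → σ {u | D u ≤ t} ≤ ENNReal.ofReal (A * t ^ (d-1)) :=
    capH d hd hr p
  have hrpow : r ^ (d-1) = r ^ ((d:ℝ) - 1) := by
    rw [← Real.rpow_natCast r (d-1), hcast]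
  have hA' : A = capC d * r ^ (-((d:ℝ)-1)) := by
    rw [hAdef, hrpow, Real.rpow_neg hr.le, div_eq_mul_inv]
  -- the function
  set g : sphere (0 : Ed d) 1 → ℝ≥0∞ := fun u =>
    ENNReal.ofReal (Real.exp (-(D u/2))) * (ENNReal.ofReal (D u)) ^ (-b) with hgdef
  have hexple : ∀ u, ENNReal.ofReal (Real.exp (-(D u/2))) ≤ 1 := fun u =>
    ENNReal.ofReal_le_one.2 (Real.exp_le_one_iff.2 (by
      have : 0 ≤ D u := norm_nonneg _
      linarith))
  have hg_le : ∀ u, g u ≤ (ENNReal.ofReal (D u)) ^ (-b) := fun u => by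
    calc g u ≤ 1 * (ENNReal.ofReal (D u)) ^ (-b) := mul_le_mul_left (hexple u) _
    _ = (ENNReal.ofReal (D u)) ^ (-b) := one_mul _
  rcases le_or_gt r 1 with hr1 | hr1
  · -- small r : bound by Cs * r^(-b)
    have hsplit := lintegral_add_compl (μ := σ) g (hD measurableSet_Iic :
      MeasurableSet {u | D u ≤ r})
    have piece1 : ∫⁻ u in {u | D u ≤ r}, g u ∂σ
        ≤ ENNReal.ofReal (A * Ka * r ^ ((d:ℝ)-1-b)) := by
      calc ∫⁻ u in {u | D u ≤ r}, g u ∂σ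
          ≤ ∫⁻ u in {u | D u ≤ r}, (ENNReal.ofReal (D u)) ^ (-b) ∂σ :=
            setLIntegral_mono' (hD measurableSet_Iic) fun u _ => hg_le u
      _ ≤ ENNReal.ofReal (A * ((2:ℝ) ^ b * (1 - (2:ℝ) ^ (-((d:ℝ)-1-b)))⁻¹)
            * r ^ ((d:ℝ)-1-b)) := dyadic_small d hd hb0 hbd σ hD hA0 hr H
    have piece2 : ∫⁻ u in {u | D u ≤ r}ᶜ, g u ∂σ
        ≤ ENNReal.ofReal (r ^ (-b) * St) := by
      have hpt : ∀ u ∈ {u | D u ≤ r}ᶜ, g u ≤ ENNReal.ofReal (r ^ (-b)) := by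
        intro u hu
        have hru : r < D u := not_le.1 hu
        calc g u ≤ (ENNReal.ofReal (D u)) ^ (-b) := hg_le u
        _ = ENNReal.ofReal ((D u) ^ (-b)) :=
            ENNReal.ofReal_rpow_of_pos (lt_trans hr hru)
        _ ≤ ENNReal.ofReal (r ^ (-b)) := ENNReal.ofReal_le_ofReal
            (Real.rpow_le_rpow_of_nonpos hr hru.le (by linarith))
      calc ∫⁻ u in {u | D u ≤ r}ᶜ, g u ∂σ
          ≤ ∫⁻ _ in {u | D u ≤ r}ᶜ, ENNReal.ofReal (r ^ (-b)) ∂σ :=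
            setLIntegral_mono' (hD measurableSet_Iic).compl hpt
      _ = ENNReal.ofReal (r ^ (-b)) * σ {u | D u ≤ r}ᶜ := setLIntegral_const _ _
      _ ≤ ENNReal.ofReal (r ^ (-b)) * ENNReal.ofReal St := by
          refine mul_le_mul_right ?_ _
          refine le_trans (measure_mono (Set.subset_univ _)) ?_
          rw [hσ, Measure.toSphere_apply_univ, finrank_euclideanSpace_fin, hSt,
            ENNReal.ofReal_mul (by positivity), ENNReal.ofReal_natCast,
            ENNReal.ofReal_toReal measure_ball_lt_top.ne]
      _ = ENNReal.ofReal (r ^ (-b) * St) := by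
          rw [← ENNReal.ofReal_mul (by positivity)]
    have hAr : A * Ka * r ^ ((d:ℝ)-1-b) = capC d * Ka * r ^ (-b) := by
      rw [hA']
      rw [show capC d * r ^ (-((d:ℝ)-1)) * Ka * r ^ ((d:ℝ)-1-b)
          = capC d * Ka * (r ^ (-((d:ℝ)-1)) * r ^ ((d:ℝ)-1-b)) by ring,
        ← Real.rpow_add hr]
      congr 2
      ring
    have htot : ∫⁻ u, g u ∂σ ≤ ENNReal.ofReal (Cs * r ^ (-b)) := by
      rw [← hsplit]
      calc (∫⁻ u in {u | D u ≤ r}, g u ∂σ) + ∫⁻ u in {u | D u ≤ r}ᶜ, g u ∂σ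
          ≤ ENNReal.ofReal (A * Ka * r ^ ((d:ℝ)-1-b)) + ENNReal.ofReal (r ^ (-b) * St) :=
            add_le_add piece1 piece2
      _ = ENNReal.ofReal (Cs * r ^ (-b)) := by
          rw [hAr, ← ENNReal.ofReal_add (by positivity) (by positivity)]
          congr 1
          rw [hCs]; ring
    refine le_trans htot (ENNReal.ofReal_le_ofReal ?_)
    rw [le_div_iff₀ hsum0]
    have e1 : r ^ (-b) * r ^ b = 1 := by
      rw [← Real.rpow_add hr]; simp
    have e2 : r ^ (-b) * r ^ ((d:ℝ)-1) = r ^ ((d:ℝ)-1-b) := by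
      rw [← Real.rpow_add hr]; congr 1; ring
    have e3 : r ^ ((d:ℝ)-1-b) ≤ 1 := Real.rpow_le_one hr.le hr1 hγ0.le
    calc Cs * r ^ (-b) * (r ^ b + r ^ ((d:ℝ)-1))
        = Cs * (r ^ (-b) * r ^ b) + Cs * (r ^ (-b) * r ^ ((d:ℝ)-1)) := by ring
    _ = Cs + Cs * r ^ ((d:ℝ)-1-b) := by rw [e1, e2, mul_one]
    _ ≤ 2 * (Cs + Cl) := by nlinarith [mul_le_mul_of_nonneg_left e3 hCs0.le]
  · -- large r : bound by Cl * r^(-(d-1))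
    have hsplit := lintegral_add_compl (μ := σ) g (hD measurableSet_Iic :
      MeasurableSet {u | D u ≤ 1})
    have piece1 : ∫⁻ u in {u | D u ≤ 1}, g u ∂σ
        ≤ ENNReal.ofReal (A * Ka) := by
      calc ∫⁻ u in {u | D u ≤ 1}, g u ∂σ
          ≤ ∫⁻ u in {u | D u ≤ 1}, (ENNReal.ofReal (D u)) ^ (-b) ∂σ :=
            setLIntegral_mono' (hD measurableSet_Iic) fun u _ => hg_le u
      _ ≤ ENNReal.ofReal (A * ((2:ℝ) ^ b * (1 - (2:ℝ) ^ (-((d:ℝ)-1-b)))⁻¹)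
            * (1:ℝ) ^ ((d:ℝ)-1-b)) := dyadic_small d hd hb0 hbd σ hD hA0 one_pos H
      _ = ENNReal.ofReal (A * Ka) := by rw [Real.one_rpow, mul_one]
    have piece2 : ∫⁻ u in {u | D u ≤ 1}ᶜ, g u ∂σ
        ≤ ENNReal.ofReal Kd * ENNReal.ofReal (A * ((2:ℝ) ^ ((d:ℝ)-1)) * 2) := by
      have hset : {u | D u ≤ 1}ᶜ = {u | 1 < D u} := by
        ext u; simp [not_le]
      have hpt : ∀ u ∈ {u | 1 < D u}, g u
          ≤ ENNReal.ofReal Kd * (ENNReal.ofReal (D u)) ^ (-(d:ℝ)) := by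
        intro u hu
        have hu1 : (1:ℝ) < D u := hu
        have hupos : (0:ℝ) < D u := lt_trans one_pos hu1
        have hb1 : (ENNReal.ofReal (D u)) ^ (-b) ≤ 1 := by
          have hq := ENNReal.rpow_le_rpow_of_exponent_le
            (ENNReal.one_le_ofReal.2 hu1.le) (by linarith : -b ≤ (0:ℝ))
          rwa [ENNReal.rpow_zero] at hq
        have hb2 : ENNReal.ofReal (Real.exp (-(D u/2)))
            ≤ ENNReal.ofReal Kd * (ENNReal.ofReal (D u)) ^ (-(d:ℝ)) := by
          rw [ENNReal.ofReal_rpow_of_pos hupos,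
            ← ENNReal.ofReal_mul hKd0.le]
          exact ENNReal.ofReal_le_ofReal (exp_poly_bound d (by omega) hupos)
        calc g u ≤ (ENNReal.ofReal Kd * (ENNReal.ofReal (D u)) ^ (-(d:ℝ))) * 1 :=
          mul_le_mul' hb2 hb1
        _ = ENNReal.ofReal Kd * (ENNReal.ofReal (D u)) ^ (-(d:ℝ)) := mul_one _
      calc ∫⁻ u in {u | D u ≤ 1}ᶜ, g u ∂σ
          ≤ ∫⁻ u in {u | D u ≤ 1}ᶜ,
              ENNReal.ofReal Kd * (ENNReal.ofReal (D u)) ^ (-(d:ℝ)) ∂σ := by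
            rw [hset]
            exact setLIntegral_mono' (hD measurableSet_Ioi) hpt
      _ = ENNReal.ofReal Kd * ∫⁻ u in {u | D u ≤ 1}ᶜ,
              (ENNReal.ofReal (D u)) ^ (-(d:ℝ)) ∂σ :=
            lintegral_const_mul _ ((ENNReal.measurable_ofReal.comp hD).pow_const _)
      _ ≤ ENNReal.ofReal Kd * ENNReal.ofReal (A * ((2:ℝ) ^ ((d:ℝ)-1)) * 2) := by
            refine mul_le_mul_right ?_ _
            rw [hset]
            exact dyadic_large d hd σ hD hA0 H
    have htot : ∫⁻ u, g u ∂σ ≤ ENNReal.ofReal (Cl * r ^ (-((d:ℝ)-1))) := by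
      rw [← hsplit]
      calc (∫⁻ u in {u | D u ≤ 1}, g u ∂σ) + ∫⁻ u in {u | D u ≤ 1}ᶜ, g u ∂σ
          ≤ ENNReal.ofReal (A * Ka)
            + ENNReal.ofReal Kd * ENNReal.ofReal (A * ((2:ℝ) ^ ((d:ℝ)-1)) * 2) :=
            add_le_add piece1 piece2
      _ = ENNReal.ofReal (Cl * r ^ (-((d:ℝ)-1))) := by
          rw [← ENNReal.ofReal_mul hKd0.le,
            ← ENNReal.ofReal_add (by positivity) (by positivity)]
          congr 1
          rw [hCl, hA', hKb]
          ring
    refine le_trans htot (ENNReal.ofReal_le_ofReal ?_)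
    rw [le_div_iff₀ hsum0]
    have e1 : r ^ (-((d:ℝ)-1)) * r ^ ((d:ℝ)-1) = 1 := by
      rw [← Real.rpow_add hr]; simp
    have e2 : r ^ (-((d:ℝ)-1)) * r ^ b = r ^ (b-((d:ℝ)-1)) := by
      rw [← Real.rpow_add hr]; congr 1; ring
    have e3 : r ^ (b-((d:ℝ)-1)) ≤ 1 :=
      Real.rpow_le_one_of_one_le_of_nonpos hr1.le (by linarith)
    calc Cl * r ^ (-((d:ℝ)-1)) * (r ^ b + r ^ ((d:ℝ)-1))
        = Cl * (r ^ (-((d:ℝ)-1)) * r ^ b) + Cl * (r ^ (-((d:ℝ)-1)) * r ^ ((d:ℝ)-1)) := by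
          ring
    _ = Cl * r ^ (b-((d:ℝ)-1)) + Cl := by rw [e1, e2, mul_one]
    _ ≤ 2 * (Cs + Cl) := by nlinarith [mul_le_mul_of_nonneg_left e3 hCl0.le]

set_option maxHeartbeats 1000000 in
/-- Lemma 5.2, part 1: sphere integral estimate. The surface measure on the unit sphere
`S^{d-1}` is realized as `(volume).toSphere`. -/
theorem sphere_integral_estimate
    (d : ℕ) (hd : 2 ≤ d) (b : ℝ) (hb0 : 0 < b) (hbd : b < (d : ℝ) - 1) :
    ∃ C : ℝ, 0 < C ∧ ∀ (r : ℝ), 0 < r → ∀ p : EuclideanSpace ℝ (Fin d),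
      (∫⁻ u : sphere (0 : EuclideanSpace ℝ (Fin d)) 1,
          ENNReal.ofReal (Real.exp (-‖r • (u : EuclideanSpace ℝ (Fin d)) - p‖)) *
            (ENNReal.ofReal ‖r • (u : EuclideanSpace ℝ (Fin d)) - p‖) ^ (-b)
          ∂((volume : Measure (EuclideanSpace ℝ (Fin d))).toSphere))
      ≤ ENNReal.ofReal (C * Real.exp (-|r - ‖p‖| / 2) / (r ^ b + r ^ ((d : ℝ) - 1))) := by
  obtain ⟨C0, hC0, hC⟩ := g_bound d hd hb0 hbd
  refine ⟨C0, hC0, fun r hr p => ?_⟩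
  set D : sphere (0 : EuclideanSpace ℝ (Fin d)) 1 → ℝ :=
    fun u => ‖r • (u : EuclideanSpace ℝ (Fin d)) - p‖ with hDdef
  have hD : Measurable D :=
    ((continuous_subtype_val.const_smul r).sub continuous_const).norm.measurable
  have hg : Measurable (fun u => ENNReal.ofReal (Real.exp (-(D u/2))) *
      (ENNReal.ofReal (D u)) ^ (-b)) := by
    have h1 : Measurable fun u => -(D u/2) := (hD.div_const 2).neg
    have h2 : Measurable fun u => ENNReal.ofReal (Real.exp (-(D u/2))) :=
      ENNReal.measurable_ofReal.comp (Real.measurable_exp.comp h1)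
    have h3 : Measurable fun u => (ENNReal.ofReal (D u)) ^ (-b) :=
      (ENNReal.measurable_ofReal.comp hD).pow_const _
    exact h2.mul h3
  have hexpnn : 0 ≤ Real.exp (-|r - ‖p‖| / 2) := (Real.exp_pos _).le
  have hpt : ∀ u, ENNReal.ofReal (Real.exp (-(D u))) * (ENNReal.ofReal (D u)) ^ (-b)
      ≤ ENNReal.ofReal (Real.exp (-|r - ‖p‖| / 2)) *
        (ENNReal.ofReal (Real.exp (-(D u/2))) * (ENNReal.ofReal (D u)) ^ (-b)) := by
    intro u
    have hm : |r - ‖p‖| ≤ D u := by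
      have h1 := abs_norm_sub_norm_le (r • (u : EuclideanSpace ℝ (Fin d))) p
      have h2 : ‖r • (u : EuclideanSpace ℝ (Fin d))‖ = r := by
        rw [norm_smul, Real.norm_eq_abs, abs_of_pos hr,
          mem_sphere_zero_iff_norm.1 u.2, mul_one]
      rwa [h2] at h1
    have he : Real.exp (-(D u)) ≤ Real.exp (-|r - ‖p‖| / 2) * Real.exp (-(D u/2)) := by
      rw [← Real.exp_add]
      exact Real.exp_le_exp.2 (by linarith)
    calc ENNReal.ofReal (Real.exp (-(D u))) * (ENNReal.ofReal (D u)) ^ (-b)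
        ≤ ENNReal.ofReal (Real.exp (-|r - ‖p‖| / 2) * Real.exp (-(D u/2))) *
            (ENNReal.ofReal (D u)) ^ (-b) :=
          mul_le_mul_left (ENNReal.ofReal_le_ofReal he) _
    _ = ENNReal.ofReal (Real.exp (-|r - ‖p‖| / 2)) *
          (ENNReal.ofReal (Real.exp (-(D u/2))) * (ENNReal.ofReal (D u)) ^ (-b)) := by
        rw [ENNReal.ofReal_mul hexpnn, mul_assoc]
  calc ∫⁻ u : sphere (0 : EuclideanSpace ℝ (Fin d)) 1,
        ENNReal.ofReal (Real.exp (-‖r • (u : EuclideanSpace ℝ (Fin d)) - p‖)) *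
          (ENNReal.ofReal ‖r • (u : EuclideanSpace ℝ (Fin d)) - p‖) ^ (-b)
        ∂((volume : Measure (EuclideanSpace ℝ (Fin d))).toSphere)
      ≤ ∫⁻ u, ENNReal.ofReal (Real.exp (-|r - ‖p‖| / 2)) *
          (ENNReal.ofReal (Real.exp (-(D u/2))) * (ENNReal.ofReal (D u)) ^ (-b))
        ∂((volume : Measure (EuclideanSpace ℝ (Fin d))).toSphere) := lintegral_mono hpt
  _ = ENNReal.ofReal (Real.exp (-|r - ‖p‖| / 2)) *
        ∫⁻ u, ENNReal.ofReal (Real.exp (-(D u/2))) * (ENNReal.ofReal (D u)) ^ (-b)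
        ∂((volume : Measure (EuclideanSpace ℝ (Fin d))).toSphere) :=
      lintegral_const_mul _ hg
  _ ≤ ENNReal.ofReal (Real.exp (-|r - ‖p‖| / 2)) *
        ENNReal.ofReal (C0 / (r ^ b + r ^ ((d : ℝ) - 1))) :=
      mul_le_mul_right (hC r hr p) _
  _ = ENNReal.ofReal (C0 * Real.exp (-|r - ‖p‖| / 2) / (r ^ b + r ^ ((d : ℝ) - 1))) := by
      rw [← ENNReal.ofReal_mul hexpnn]
      congr 1
      ring
end
end

section
/- Uniform one-dimensional exponential-singular integral bound (final step in the proof of Lemma 5.2): For every τ > 0 and every α, β ≥ 0 with α < 1 and α + β < 1, one has sup_{y ∈ ℝ} ∫_0^∞ e^{−τ|t−y|} · t^{−β} · |t−y|^{−α} dt < ∞. -/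
open MeasureTheory
open scoped ENNReal NNReal

noncomputable section
open Real Set

lemma aux_rpow_mul (x : ℝ≥0∞) {a b : ℝ} (ha : 0 ≤ a) (hb : 0 ≤ b) :
    x ^ (-b) * x ^ (-a) = x ^ (-(a + b)) := by
  rcases eq_or_ne x 0 with rfl | hx0
  · rcases eq_or_lt_of_le ha with rfl | ha' <;> rcases eq_or_lt_of_le hb with rfl | hb' <;>
      · simp_all [ENNReal.zero_rpow_def]
        try (split_ifs <;> simp_all <;> linarith)
  rcases eq_or_ne x ⊤ with rfl | hxt
  · rcases eq_or_lt_of_le ha with rfl | ha' <;> rcases eq_or_lt_of_le hb with rfl | hb' <;>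
      · simp_all [ENNReal.top_rpow_def]
        try (split_ifs <;> simp_all <;> linarith)
  · rw [← ENNReal.rpow_add _ _ hx0 hxt]; ring_nf

lemma aux_anti {a b : ℝ≥0∞} {c : ℝ} (hab : a ≤ b) (hc : 0 ≤ c) : b ^ (-c) ≤ a ^ (-c) := by
  rw [ENNReal.rpow_neg, ENNReal.rpow_neg]
  exact ENNReal.inv_le_inv.mpr (ENNReal.rpow_le_rpow hab hc)

lemma aux_split (a b : ℝ≥0∞) {x y : ℝ} (hx : 0 ≤ x) (hy : 0 ≤ y) :
    a ^ (-y) * b ^ (-x) ≤ a ^ (-(x + y)) + b ^ (-(x + y)) := by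
  rcases le_total a b with h | h
  · calc a ^ (-y) * b ^ (-x) ≤ a ^ (-y) * a ^ (-x) := by
          exact mul_le_mul_right (aux_anti h hx) _
      _ = a ^ (-(x + y)) := aux_rpow_mul a hx hy
      _ ≤ _ := le_self_add
  · calc a ^ (-y) * b ^ (-x) ≤ b ^ (-y) * b ^ (-x) := by
          exact mul_le_mul_left (aux_anti h hy) _
      _ = b ^ (-(x + y)) := aux_rpow_mul b hx hy
      _ ≤ _ := le_add_self

-- measurability of H
lemma aux_H_meas (τ γ : ℝ) : Measurable (fun s : ℝ =>
    ENNReal.ofReal (Real.exp (-(τ * |s|))) * (1 + (ENNReal.ofReal |s|) ^ (-γ))) := by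
  fun_prop

-- finiteness of ∫ H on Ioi 0
lemma aux_H_Ioi (τ γ : ℝ) (hτ : 0 < τ) (hγ0 : 0 ≤ γ) (hγ : γ < 1) :
    ∫⁻ s in Ioi (0:ℝ), ENNReal.ofReal (Real.exp (-(τ * |s|))) * (1 + (ENNReal.ofReal |s|) ^ (-γ)) < ⊤ := by
  have hint : IntegrableOn (fun s : ℝ => Real.exp (-(τ * s)) * (1 + s ^ (-γ))) (Ioi 0) := by
    have h1 : IntegrableOn (fun s : ℝ => Real.exp (-τ * s)) (Ioi 0) :=
      exp_neg_integrableOn_Ioi 0 hτ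
    have h2 : IntegrableOn (fun s : ℝ => s ^ (-γ) * Real.exp (-τ * s)) (Ioi 0) := by
      have := integrableOn_rpow_mul_exp_neg_mul_rpow (p := 1) (s := -γ) (b := τ)
        (by linarith) one_pos hτ
      simpa [Real.rpow_one] using this
    refine (IntegrableOn.congr_fun (h1.add h2) (fun s _ => ?_) measurableSet_Ioi)
    simp only [Pi.add_apply]
    ring_nf
  have := hint.lintegral_lt_top
  refine lt_of_le_of_lt (le_of_eq ?_) this
  apply setLIntegral_congr_fun measurableSet_Ioi
  intro s hs
  beta_reduce
  rw [abs_of_pos hs, ENNReal.ofReal_mul (Real.exp_nonneg _)]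
  congr 1
  rw [ENNReal.ofReal_add zero_le_one (Real.rpow_nonneg hs.le _), ENNReal.ofReal_one,
    ENNReal.ofReal_rpow_of_pos hs]

lemma aux_H_fin (τ γ : ℝ) (hτ : 0 < τ) (hγ0 : 0 ≤ γ) (hγ : γ < 1) :
    ∫⁻ s : ℝ, ENNReal.ofReal (Real.exp (-(τ * |s|))) * (1 + (ENNReal.ofReal |s|) ^ (-γ)) < ⊤ := by
  set H : ℝ → ℝ≥0∞ := fun s => ENNReal.ofReal (Real.exp (-(τ * |s|))) * (1 + (ENNReal.ofReal |s|) ^ (-γ)) with hH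
  have hmeas := aux_H_meas τ γ
  have hIoi := aux_H_Ioi τ γ hτ hγ0 hγ
  have h1 : ∫⁻ s in Ici (0:ℝ), H s = ∫⁻ s in Ioi (0:ℝ), H s :=
    (setLIntegral_congr (Ioi_ae_eq_Ici (a := (0:ℝ)))).symm
  have h2 : ∫⁻ s in Iio (0:ℝ), H s = ∫⁻ s in Ioi (0:ℝ), H s := by
    have hmp := Measure.measurePreserving_neg (volume : Measure ℝ)
    calc ∫⁻ s in Iio (0:ℝ), H s
        = ∫⁻ s in Iio (0:ℝ), H s ∂(Measure.map Neg.neg volume) := by rw [hmp.map_eq]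
      _ = ∫⁻ x in Neg.neg ⁻¹' (Iio (0:ℝ)), H (-x) := by
          rw [setLIntegral_map measurableSet_Iio hmeas measurable_neg]
      _ = ∫⁻ x in Ioi (0:ℝ), H x := by
          have hpre : Neg.neg ⁻¹' (Iio (0:ℝ)) = Ioi (0:ℝ) := by
            ext x; simp
          rw [hpre]
          refine setLIntegral_congr_fun measurableSet_Ioi ?_
          intro x hx
          simp [hH, abs_neg]
  calc ∫⁻ s : ℝ, H s = (∫⁻ s in Ici (0:ℝ), H s) + ∫⁻ s in (Ici (0:ℝ))ᶜ, H s :=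
        (lintegral_add_compl H measurableSet_Ici).symm
    _ = (∫⁻ s in Ioi (0:ℝ), H s) + ∫⁻ s in Ioi (0:ℝ), H s := by rw [h1, compl_Ici, h2]
    _ < ⊤ := ENNReal.add_lt_top.mpr ⟨hIoi, hIoi⟩

lemma aux_pointwise (τ α β : ℝ) (hτ : 0 < τ) (hα : 0 ≤ α) (hβ : 0 ≤ β)
    (y t : ℝ) (ht : t ∈ Ioi (0:ℝ)) :
    ENNReal.ofReal (Real.exp (-(τ * |t - y|))) * (ENNReal.ofReal t) ^ (-β) *
        (ENNReal.ofReal |t - y|) ^ (-α)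
      ≤ (Ioo (0:ℝ) 1).indicator (fun t => (ENNReal.ofReal t) ^ (-(α + β))) t +
        ENNReal.ofReal (Real.exp (-(τ * |t - y|))) * (1 + (ENNReal.ofReal |t - y|) ^ (-(α + β))) := by
  set E : ℝ≥0∞ := ENNReal.ofReal (Real.exp (-(τ * |t - y|))) with hE
  set A : ℝ≥0∞ := ENNReal.ofReal t with hA
  set B : ℝ≥0∞ := ENNReal.ofReal |t - y| with hB
  have hE1 : E ≤ 1 := by
    rw [hE, ← ENNReal.ofReal_one]
    refine ENNReal.ofReal_le_ofReal (Real.exp_le_one_iff.mpr ?_)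
    have : 0 ≤ τ * |t - y| := by positivity
    linarith
  have step : E * A ^ (-(α + β)) ≤
      (Ioo (0:ℝ) 1).indicator (fun t => (ENNReal.ofReal t) ^ (-(α + β))) t + E := by
    rcases lt_or_ge t 1 with h1 | h1
    · have hind : (Ioo (0:ℝ) 1).indicator (fun t => (ENNReal.ofReal t) ^ (-(α + β))) t
          = A ^ (-(α + β)) := indicator_of_mem (mem_Ioo.mpr ⟨ht, h1⟩) _
      calc E * A ^ (-(α + β)) ≤ 1 * A ^ (-(α + β)) := mul_le_mul_left hE1 _
        _ = A ^ (-(α + β)) := one_mul _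
        _ ≤ _ := by rw [hind] at *; exact le_add_right le_rfl
    · have hA1 : (1:ℝ≥0∞) ≤ A := by
        rw [hA, ← ENNReal.ofReal_one]; exact ENNReal.ofReal_le_ofReal h1
      have : A ^ (-(α + β)) ≤ 1 := by
        have := aux_anti hA1 (by linarith : (0:ℝ) ≤ α + β)
        simpa using this
      calc E * A ^ (-(α + β)) ≤ E * 1 := mul_le_mul_right this _
        _ = E := mul_one _
        _ ≤ _ := le_add_self
  calc E * A ^ (-β) * B ^ (-α) = E * (A ^ (-β) * B ^ (-α)) := mul_assoc _ _ _
    _ ≤ E * (A ^ (-(α + β)) + B ^ (-(α + β))) := mul_le_mul_right (aux_split A B hα hβ) E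
    _ = E * A ^ (-(α + β)) + E * B ^ (-(α + β)) := mul_add _ _ _
    _ ≤ ((Ioo (0:ℝ) 1).indicator (fun t => (ENNReal.ofReal t) ^ (-(α + β))) t + E)
          + E * B ^ (-(α + β)) := add_le_add_left step _
    _ = _ := by rw [mul_add, mul_one, add_assoc]

lemma aux_ind_fin (α β : ℝ) (hα : 0 ≤ α) (hβ : 0 ≤ β) (hαβ : α + β < 1) :
    ∫⁻ t : ℝ, (Ioo (0:ℝ) 1).indicator (fun t => (ENNReal.ofReal t) ^ (-(α + β))) t < ⊤ := by
  rw [lintegral_indicator measurableSet_Ioo _]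
  have h : ∫⁻ t in Ioo (0:ℝ) 1, (ENNReal.ofReal t) ^ (-(α + β))
      = ∫⁻ t in Ioo (0:ℝ) 1, ENNReal.ofReal (t ^ (-(α + β))) := by
    refine setLIntegral_congr_fun measurableSet_Ioo ?_
    intro t ht
    beta_reduce
    rw [ENNReal.ofReal_rpow_of_pos ht.1]
  rw [h]
  exact ((intervalIntegral.integrableOn_Ioo_rpow_iff one_pos).mpr (by linarith)).lintegral_lt_top


/-- Uniform one-dimensional exponential-singular integral bound (final step in the proof of
Lemma 5.2). The integrand takes values in `[0,∞]` (it is `∞` at the singularities). -/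
theorem uniform_one_dim_exponential_singular_bound
    (τ α β : ℝ) (hτ : 0 < τ) (hα : 0 ≤ α) (hβ : 0 ≤ β) (hα1 : α < 1) (hαβ : α + β < 1) :
    (⨆ y : ℝ, ∫⁻ t in Set.Ioi (0 : ℝ),
      ENNReal.ofReal (Real.exp (-(τ * |t - y|))) * (ENNReal.ofReal t) ^ (-β) *
        (ENNReal.ofReal |t - y|) ^ (-α)) < ⊤ := by
  set Ind : ℝ → ℝ≥0∞ := (Ioo (0:ℝ) 1).indicator (fun t => (ENNReal.ofReal t) ^ (-(α + β))) with hInd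
  set H : ℝ → ℝ≥0∞ := fun s =>
    ENNReal.ofReal (Real.exp (-(τ * |s|))) * (1 + (ENNReal.ofReal |s|) ^ (-(α + β))) with hH
  have hγ0 : (0:ℝ) ≤ α + β := by linarith
  have hIndMeas : Measurable Ind := by
    apply Measurable.indicator ?_ measurableSet_Ioo
    fun_prop
  have hHmeas : Measurable H := aux_H_meas τ (α + β)
  refine lt_of_le_of_lt (iSup_le fun y => ?_)
    (ENNReal.add_lt_top.mpr ⟨aux_ind_fin α β hα hβ hαβ, aux_H_fin τ (α + β) hτ hγ0 hαβ⟩)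
  calc ∫⁻ t in Set.Ioi (0 : ℝ),
      ENNReal.ofReal (Real.exp (-(τ * |t - y|))) * (ENNReal.ofReal t) ^ (-β) *
        (ENNReal.ofReal |t - y|) ^ (-α)
      ≤ ∫⁻ t in Set.Ioi (0:ℝ), (Ind t + H (t - y)) := by
        refine setLIntegral_mono (by fun_prop) ?_
        intro t ht
        exact aux_pointwise τ α β hτ hα hβ y t ht
    _ = (∫⁻ t in Set.Ioi (0:ℝ), Ind t) + ∫⁻ t in Set.Ioi (0:ℝ), H (t - y) :=
        lintegral_add_left hIndMeas _
    _ ≤ (∫⁻ t : ℝ, Ind t) + ∫⁻ t : ℝ, H (t - y) :=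
        add_le_add (setLIntegral_le_lintegral _ _) (setLIntegral_le_lintegral _ _)
    _ = (∫⁻ t : ℝ, Ind t) + ∫⁻ s : ℝ, H s := by
        congr 1
        simp_rw [sub_eq_add_neg]
        exact lintegral_add_right_eq_self H (-y)
end
end

section
/- Weighted convolution tail estimate (the analytic content of Lemma 4.1): Let b ≥ 0 and let g, ε : ℝ → [0,∞] be measurable with M = ∫_ℝ (1+|τ|)^b g(τ) dτ < ∞. Then for every r ≥ 0: ∫_r^∞ ( ∫_ℝ g(τ) ε(t−τ) dτ ) dt ≤ 2^b M [ ∫_{−∞}^0 (1+|t|+r)^{−b} ε(t) dt + (1+r)^{−b} ∫_0^∞ ε(t) dt + ∫_{r/2}^∞ ε(t) dt ]. -/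
open MeasureTheory
open scoped ENNReal NNReal

noncomputable section

/-- Weighted convolution tail estimate: the analytic content of Lemma 4.1. -/
theorem weighted_convolution_tail_estimate
    (b : ℝ) (hb : 0 ≤ b) (g ε : ℝ → ℝ≥0∞) (hg : Measurable g) (hε : Measurable ε)
    (M : ℝ≥0∞) (hM : M = ∫⁻ τ : ℝ, ENNReal.ofReal ((1 + |τ|) ^ b) * g τ) (hMfin : M < ⊤)
    (r : ℝ) (hr : 0 ≤ r) :
    (∫⁻ t in Set.Ioi r, ∫⁻ τ : ℝ, g τ * ε (t - τ))
      ≤ ENNReal.ofReal (2 ^ b) * M *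
        ((∫⁻ t in Set.Iic (0 : ℝ), ENNReal.ofReal ((1 + |t| + r) ^ (-b)) * ε t) +
          ENNReal.ofReal ((1 + r) ^ (-b)) * (∫⁻ t in Set.Ioi (0 : ℝ), ε t) +
          ∫⁻ t in Set.Ioi (r / 2), ε t) := by
  set S₁ := ∫⁻ t in Set.Iic (0 : ℝ), ENNReal.ofReal ((1 + |t| + r) ^ (-b)) * ε t with hS₁
  set S₂ := ∫⁻ t in Set.Ioi (0 : ℝ), ε t with hS₂
  set S₃ := ∫⁻ t in Set.Ioi (r / 2), ε t with hS₃
  set S := S₁ + ENNReal.ofReal ((1 + r) ^ (-b)) * S₂ + S₃ with hS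
  have hrp1 : Measurable fun s : ℝ => (1 + |s| + r) ^ (-b) := by
    have hbase : Measurable fun s : ℝ => (1 : ℝ) + |s| + r :=
      (measurable_const.add measurable_id.abs).add measurable_const
    have heq : (fun s : ℝ => (1 + |s| + r) ^ (-b))
        = fun s => Real.exp (Real.log (1 + |s| + r) * (-b)) :=
      funext fun s => Real.rpow_def_of_pos (by positivity) _
    rw [heq]
    exact Real.measurable_exp.comp ((Real.measurable_log.comp hbase).mul_const _)
  have hrp2 : Measurable fun τ : ℝ => (1 + |τ|) ^ b := by
    have hbase : Measurable fun τ : ℝ => (1 : ℝ) + |τ| :=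
      measurable_const.add measurable_id.abs
    have heq : (fun τ : ℝ => (1 + |τ|) ^ b)
        = fun τ => Real.exp (Real.log (1 + |τ|) * b) :=
      funext fun τ => Real.rpow_def_of_pos (by positivity) _
    rw [heq]
    exact Real.measurable_exp.comp ((Real.measurable_log.comp hbase).mul_const _)
  have hwmeas : Measurable fun s : ℝ => ENNReal.ofReal ((1 + |s| + r) ^ (-b)) * ε s :=
    (ENNReal.measurable_ofReal.comp hrp1).mul hε
  -- Step 1: Tonelli swap
  have hmeas2 : Measurable fun p : ℝ × ℝ => g p.2 * ε (p.1 - p.2) :=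
    (hg.comp measurable_snd).mul (hε.comp (measurable_fst.sub measurable_snd))
  have hswap : (∫⁻ t in Set.Ioi r, ∫⁻ τ : ℝ, g τ * ε (t - τ))
      = ∫⁻ τ : ℝ, g τ * ∫⁻ t in Set.Ioi r, ε (t - τ) := by
    rw [lintegral_lintegral_swap hmeas2.aemeasurable]
    refine lintegral_congr fun τ => ?_
    exact lintegral_const_mul (g τ) (hε.comp (measurable_id.sub measurable_const))
  -- Step 2: translation
  have hshift : ∀ τ : ℝ, (∫⁻ t in Set.Ioi r, ε (t - τ)) = ∫⁻ s in Set.Ioi (r - τ), ε s := by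
    intro τ
    have hmp : MeasurePreserving (fun x : ℝ => x - τ) volume volume :=
      measurePreserving_sub_right volume τ
    have hemb : MeasurableEmbedding (fun x : ℝ => x - τ) :=
      (MeasurableEquiv.subRight τ).measurableEmbedding
    have h := hmp.setLIntegral_comp_preimage_emb hemb ε (Set.Ioi (r - τ))
    have hpre : (fun x : ℝ => x - τ) ⁻¹' Set.Ioi (r - τ) = Set.Ioi r := by
      ext x; simp [sub_lt_sub_iff_right]
    rw [hpre] at h
    exact h
  -- Step 3: key pointwise-in-τ tail estimate
  have key : ∀ τ : ℝ, (∫⁻ s in Set.Ioi (r - τ), ε s)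
      ≤ ENNReal.ofReal (2 ^ b * (1 + |τ|) ^ b) * S := by
    intro τ
    have h1τ : (0 : ℝ) < 1 + |τ| := by positivity
    have hcoef1 : (1 : ℝ) ≤ 2 ^ b * (1 + |τ|) ^ b := by
      rw [← Real.mul_rpow (by norm_num) h1τ.le]
      exact Real.one_le_rpow (by nlinarith [abs_nonneg τ]) hb
    have hcoef1' : (1 : ℝ≥0∞) ≤ ENNReal.ofReal (2 ^ b * (1 + |τ|) ^ b) :=
      ENNReal.one_le_ofReal.mpr hcoef1
    rcases le_or_gt τ (r / 2) with hτ | hτ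
    · calc (∫⁻ s in Set.Ioi (r - τ), ε s) ≤ S₃ := by
            refine lintegral_mono_set fun s hs => ?_
            simp only [Set.mem_Ioi] at *
            linarith
        _ ≤ S := by rw [hS]; exact le_add_self
        _ ≤ ENNReal.ofReal (2 ^ b * (1 + |τ|) ^ b) * S :=
            le_mul_of_one_le_left (zero_le) hcoef1'
    · -- τ > r/2
      have hτ0 : 0 < τ := by linarith
      have habsτ : |τ| = τ := abs_of_pos hτ0
      -- piece over Iic 0
      have hA : (∫⁻ s in Set.Ioi (r - τ) ∩ Set.Iic 0, ε s)
          ≤ ENNReal.ofReal ((1 + |τ|) ^ b) * S₁ := by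
        have hpt : ∀ s ∈ Set.Ioi (r - τ) ∩ Set.Iic 0,
            ε s ≤ ENNReal.ofReal ((1 + |τ|) ^ b) *
              (ENNReal.ofReal ((1 + |s| + r) ^ (-b)) * ε s) := by
          rintro s ⟨hs1, hs2⟩
          rw [← mul_assoc, ← ENNReal.ofReal_mul (by positivity)]
          refine le_mul_of_one_le_left (zero_le) ?_
          rw [ENNReal.one_le_ofReal]
          have habs : |s| = -s := abs_of_nonpos hs2
          have h2 : (0 : ℝ) < 1 + |s| + r := by positivity
          have hle : 1 + |s| + r ≤ 1 + |τ| := by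
            rw [habs, habsτ]
            simp only [Set.mem_Ioi] at hs1
            linarith
          rw [Real.rpow_neg h2.le, ← div_eq_mul_inv, le_div_iff₀ (by positivity), one_mul]
          exact Real.rpow_le_rpow h2.le hle hb
        calc (∫⁻ s in Set.Ioi (r - τ) ∩ Set.Iic 0, ε s)
            ≤ ∫⁻ s in Set.Ioi (r - τ) ∩ Set.Iic 0,
                ENNReal.ofReal ((1 + |τ|) ^ b) *
                  (ENNReal.ofReal ((1 + |s| + r) ^ (-b)) * ε s) :=
              setLIntegral_mono (measurable_const.mul hwmeas) hpt
          _ = ENNReal.ofReal ((1 + |τ|) ^ b) *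
                ∫⁻ s in Set.Ioi (r - τ) ∩ Set.Iic 0,
                  ENNReal.ofReal ((1 + |s| + r) ^ (-b)) * ε s :=
              lintegral_const_mul _ hwmeas
          _ ≤ ENNReal.ofReal ((1 + |τ|) ^ b) * S₁ := by
              gcongr
              exact lintegral_mono_set Set.inter_subset_right
      -- piece over Ioi 0
      have hB : S₂ ≤ ENNReal.ofReal (2 ^ b * (1 + |τ|) ^ b) *
          (ENNReal.ofReal ((1 + r) ^ (-b)) * S₂) := by
        rw [← mul_assoc, ← ENNReal.ofReal_mul (by positivity)]
        refine le_mul_of_one_le_left (zero_le) ?_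
        rw [ENNReal.one_le_ofReal]
        have h1r : (0 : ℝ) < 1 + r := by linarith
        have hcmp : 1 + r ≤ 2 * (1 + |τ|) := by rw [habsτ]; linarith
        rw [← Real.mul_rpow (by norm_num) h1τ.le, Real.rpow_neg h1r.le, ← div_eq_mul_inv,
          le_div_iff₀ (by positivity), one_mul]
        exact Real.rpow_le_rpow h1r.le hcmp hb
      have hsplit : Set.Ioi (r - τ) ⊆ (Set.Ioi (r - τ) ∩ Set.Iic 0) ∪ Set.Ioi 0 := by
        intro s hs
        rcases le_or_gt s 0 with h | h
        · exact Or.inl ⟨hs, h⟩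
        · exact Or.inr h
      have h2b : (1 : ℝ) ≤ 2 ^ b := Real.one_le_rpow one_le_two hb
      calc (∫⁻ s in Set.Ioi (r - τ), ε s)
          ≤ ∫⁻ s in (Set.Ioi (r - τ) ∩ Set.Iic 0) ∪ Set.Ioi 0, ε s :=
            lintegral_mono_set hsplit
        _ ≤ (∫⁻ s in Set.Ioi (r - τ) ∩ Set.Iic 0, ε s) + S₂ := lintegral_union_le _ _ _
        _ ≤ ENNReal.ofReal (2 ^ b * (1 + |τ|) ^ b) * S₁ +
              ENNReal.ofReal (2 ^ b * (1 + |τ|) ^ b) * (ENNReal.ofReal ((1 + r) ^ (-b)) * S₂) := by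
            refine add_le_add (hA.trans ?_) hB
            gcongr
            nlinarith [Real.rpow_nonneg h1τ.le b, h2b]
        _ = ENNReal.ofReal (2 ^ b * (1 + |τ|) ^ b) *
              (S₁ + ENNReal.ofReal ((1 + r) ^ (-b)) * S₂) := by ring
        _ ≤ ENNReal.ofReal (2 ^ b * (1 + |τ|) ^ b) * S := by
            gcongr
            rw [hS]
            exact le_self_add
  -- Step 4: assemble
  have hfmeas : Measurable fun τ : ℝ => ENNReal.ofReal ((1 + |τ|) ^ b) * g τ :=
    (ENNReal.measurable_ofReal.comp hrp2).mul hg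
  rw [hswap]
  simp_rw [hshift]
  calc (∫⁻ τ : ℝ, g τ * ∫⁻ s in Set.Ioi (r - τ), ε s)
      ≤ ∫⁻ τ : ℝ, g τ * (ENNReal.ofReal (2 ^ b * (1 + |τ|) ^ b) * S) :=
        lintegral_mono fun τ => mul_le_mul_right (key τ) _
    _ = ∫⁻ τ : ℝ, (ENNReal.ofReal (2 ^ b) * S) * (ENNReal.ofReal ((1 + |τ|) ^ b) * g τ) := by
        refine lintegral_congr fun τ => ?_
        rw [ENNReal.ofReal_mul (by positivity)]
        ring
    _ = (ENNReal.ofReal (2 ^ b) * S) * ∫⁻ τ : ℝ, ENNReal.ofReal ((1 + |τ|) ^ b) * g τ :=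
        lintegral_const_mul _ hfmeas
    _ = ENNReal.ofReal (2 ^ b) * M * S := by rw [← hM]; ring
end
end
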